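/- Let K be a field with algebraic closure K̄, let f ∈ K[x] be monic, irreducible and nonconstant, let c, b ∈ K, and set g(x) = f(x + c) (so that g lies in the same block as f). Then for every root α ∈ K̄ of f and every root β ∈ K̄ of g, the minimal polynomial over K of f(α − b) equals the minimal polynomial over K of g(β − b). Equivalently, f ▷ f_b⁺ = g ▷ g_b⁺. -/

import Mathlib

open Polynomial

private lemma wedge_aux (K : Type*) [Field K] (f : K[X]) (hf_irr : Irreducible f) (b : K)
    (α : AlgebraicClosure K) (hα : Polynomial.aeval α f = 0) :
    minpoly K (Polynomial.aeval (α - algebraMap K (AlgebraicClosure K) b) f) =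
      minpoly K (Polynomial.aeval (AdjoinRoot.root f -
        algebraMap K (AdjoinRoot f) b) f) := by
  haveI : Fact (Irreducible f) := ⟨hf_irr⟩
  let φ : AdjoinRoot f →ₐ[K] AlgebraicClosure K := AdjoinRoot.liftAlgHom f (Algebra.ofId K _) α
    (by simpa [Polynomial.aeval_def] using hα)
  have hinj : Function.Injective φ := φ.toRingHom.injective
  have := minpoly.algHom_eq φ hinj
    (Polynomial.aeval (AdjoinRoot.root f - algebraMap K (AdjoinRoot f) b) f)
  rw [← this]
  congr 1
  rw [← Polynomial.aeval_algHom_apply]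
  congr 1
  simp [φ, AdjoinRoot.liftAlgHom_root, AdjoinRoot.liftAlgHom_of]

/-- Lemma 3.1 (iv): if `f` and `g = f(x + c)` lie in the same block, then for every
`b ∈ K` one has `f ▷ f_b⁺ = g ▷ g_b⁺`.  Concretely, for every root `α` of `f` and every
root `β` of `g` in the algebraic closure, the minimal polynomial of `f(α - b)` equals
the minimal polynomial of `g(β - b)`. -/
theorem block_selfWedge_independent (K : Type*) [Field K] (f : K[X])
    (hf_monic : f.Monic) (hf_irr : Irreducible f) (hf_deg : 0 < f.natDegree)
    (c b : K) (g : K[X]) (hg : g = f.comp (X + C c)) :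
    ∀ α β : AlgebraicClosure K, Polynomial.aeval α f = 0 → Polynomial.aeval β g = 0 →
      minpoly K (Polynomial.aeval (α - algebraMap K (AlgebraicClosure K) b) f) =
      minpoly K (Polynomial.aeval (β - algebraMap K (AlgebraicClosure K) b) g) := by
  intro α β hα hβ
  have hβ' : Polynomial.aeval (β + algebraMap K (AlgebraicClosure K) c) f = 0 := by
    subst hg
    simpa [Polynomial.aeval_comp] using hβ
  have hg' : Polynomial.aeval (β - algebraMap K (AlgebraicClosure K) b) g =
      Polynomial.aeval (β + algebraMap K (AlgebraicClosure K) c -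
        algebraMap K (AlgebraicClosure K) b) f := by
    subst hg
    rw [Polynomial.aeval_comp]
    simp only [map_add, aeval_X, aeval_C]
    ring_nf
  rw [hg', wedge_aux K f hf_irr b α hα,
    wedge_aux K f hf_irr b (β + algebraMap K (AlgebraicClosure K) c) hβ']
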